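/- Let N ≥ 1, let Ω ⊂ ℝ^N be a bounded measurable set of positive Lebesgue measure, let k > 0 and l > 2, let v : Ω → (0,∞) be measurable, and let w be a real-valued function that is twice continuously differentiable on a neighborhood of Ω, with mean w̄ = (1/|Ω|)∫_Ω w dx. Assume that all the integrals below are finite, that the integration-by-parts identity ∫_Ω ‖∇w‖² dx = −∫_Ω (w − w̄)·Δw dx holds, and that the Poincaré–Sobolev inequality (∫_Ω |w − w̄|^l dx)^{1/l} ≤ C_S (∫_Ω ‖∇w‖² dx)^{1/2} holds with constant C_S > 0. Then ∫_Ω ‖∇w‖² dx ≤ C_S² · (∫_Ω v^k |Δw|² dx) · (∫_Ω v^{−kl/(l−2)} dx)^{(l−2)/l}. -/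

import Mathlib

open MeasureTheory

/-- The Laplacian of a function on Euclidean space, as the sum of the second
partial derivatives in the coordinate directions. -/
noncomputable def laplacian {N : ℕ} (w : EuclideanSpace ℝ (Fin N) → ℝ)
    (x : EuclideanSpace ℝ (Fin N)) : ℝ :=
  ∑ i : Fin N, fderiv ℝ (fun y => fderiv ℝ w y (EuclideanSpace.single i 1)) x
    (EuclideanSpace.single i 1)

/-- Weighted dissipation estimate: if `w` is `C²` on a neighborhood of the bounded
measurable set `Ω`, the integration-by-parts identity and the Poincaré–Sobolev
inequality with constant `C_S` hold, and all integrals involved are finite, then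
`∫_Ω ‖∇w‖² ≤ C_S² (∫_Ω v^k |Δw|²) (∫_Ω v^{−kl/(l−2)})^{(l−2)/l}`. -/
theorem stmt_14 (N : ℕ) (hN : 1 ≤ N)
    (Ω : Set (EuclideanSpace ℝ (Fin N))) (hΩmeas : MeasurableSet Ω)
    (hΩbdd : Bornology.IsBounded Ω) (hΩpos : 0 < volume Ω)
    (k l : ℝ) (hk : 0 < k) (hl : 2 < l)
    (v : EuclideanSpace ℝ (Fin N) → ℝ)
    (hv_meas : Measurable v) (hv_pos : ∀ x ∈ Ω, 0 < v x)
    (w : EuclideanSpace ℝ (Fin N) → ℝ)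
    (hw : ∃ U : Set (EuclideanSpace ℝ (Fin N)), IsOpen U ∧ Ω ⊆ U ∧ ContDiffOn ℝ 2 w U)
    (wbar : ℝ) (hwbar : wbar = (1 / (volume Ω).toReal) * ∫ x in Ω, w x)
    (C_S : ℝ) (hCS : 0 < C_S)
    -- finiteness of all integrals involved
    (hint₁ : IntegrableOn (fun x => ‖gradient w x‖ ^ 2) Ω)
    (hint₂ : IntegrableOn (fun x => v x ^ k * (laplacian w x) ^ 2) Ω)
    (hint₃ : IntegrableOn (fun x => v x ^ (-(k * l / (l - 2)))) Ω)
    (hint₄ : IntegrableOn (fun x => |w x - wbar| ^ l) Ω)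
    (hint₅ : IntegrableOn (fun x => (w x - wbar) * laplacian w x) Ω)
    -- integration by parts identity
    (hIBP : ∫ x in Ω, ‖gradient w x‖ ^ 2 = -∫ x in Ω, (w x - wbar) * laplacian w x)
    -- Poincaré–Sobolev inequality
    (hPS : (∫ x in Ω, |w x - wbar| ^ l) ^ (1 / l) ≤
      C_S * (∫ x in Ω, ‖gradient w x‖ ^ 2) ^ ((1 : ℝ) / 2)) :
    ∫ x in Ω, ‖gradient w x‖ ^ 2 ≤
      C_S ^ 2 * (∫ x in Ω, v x ^ k * (laplacian w x) ^ 2) *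
        (∫ x in Ω, v x ^ (-(k * l / (l - 2)))) ^ ((l - 2) / l) := by
  obtain ⟨U, hUopen, hΩU, hwU⟩ := hw
  -- notation
  set μ : Measure (EuclideanSpace ℝ (Fin N)) := volume.restrict Ω with hμ
  set D : ℝ := ∫ x in Ω, ‖gradient w x‖ ^ 2 with hD
  set A : ℝ := ∫ x in Ω, v x ^ k * (laplacian w x) ^ 2 with hA
  set B : ℝ := ∫ x in Ω, v x ^ (-(k * l / (l - 2))) with hB
  set L : ℝ := ∫ x in Ω, |w x - wbar| ^ l with hL
  have hl0 : (0:ℝ) < l := by linarith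
  have hl2 : (0:ℝ) < l - 2 := by linarith
  have hD0 : 0 ≤ D := by
    apply integral_nonneg
    intro x; positivity
  have hA0 : 0 ≤ A := by
    apply setIntegral_nonneg hΩmeas
    intro x hx
    have := (hv_pos x hx).le
    positivity
  have hB0 : 0 ≤ B := by
    apply setIntegral_nonneg hΩmeas
    intro x hx
    exact Real.rpow_nonneg (hv_pos x hx).le _
  have hL0 : 0 ≤ L := by
    apply integral_nonneg
    intro x
    exact Real.rpow_nonneg (abs_nonneg _) _
  rcases hD0.eq_or_lt with hDeq | hDpos
  · rw [← hDeq]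
    have : (0:ℝ) ≤ B ^ ((l - 2) / l) := Real.rpow_nonneg hB0 _
    positivity
  -- measurability facts
  have hΔmeas : Measurable (laplacian w) := by
    unfold laplacian
    exact Finset.measurable_sum _ fun i _ =>
      measurable_fderiv_apply_const ℝ _ _
  have hwae : AEMeasurable w μ :=
    ((hwU.continuousOn.mono hΩU).aemeasurable hΩmeas)
  have hmem : ∀ᵐ x ∂μ, x ∈ Ω := ae_restrict_mem hΩmeas
  -- ENNReal-valued ingredients
  set φ : EuclideanSpace ℝ (Fin N) → ENNReal := fun x => ENNReal.ofReal |laplacian w x| with hφ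
  set ψ : EuclideanSpace ℝ (Fin N) → ENNReal := fun x => ENNReal.ofReal |w x - wbar| with hψ
  set V : EuclideanSpace ℝ (Fin N) → ENNReal := fun x => ENNReal.ofReal (v x) with hV
  have hφm : Measurable φ := hΔmeas.abs.ennreal_ofReal
  have hψm : AEMeasurable ψ μ :=
    (ENNReal.measurable_ofReal.comp measurable_abs).comp_aemeasurable
      (hwae.sub aemeasurable_const)
  have hVm : Measurable V := hv_meas.ennreal_ofReal
  have hVpos : ∀ᵐ x ∂μ, 0 < v x := hmem.mono fun x hx => hv_pos x hx
  -- lintegral identities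
  have hlA : ∫⁻ x, V x ^ (k : ℝ) * φ x ^ (2:ℝ) ∂μ = ENNReal.ofReal A := by
    rw [hA, ofReal_integral_eq_lintegral_ofReal hint₂
      (hVpos.mono fun x hx => by positivity)]
    apply lintegral_congr_ae
    filter_upwards [hVpos] with x hx
    rw [hφ, hV]
    rw [ENNReal.ofReal_rpow_of_pos hx, ENNReal.ofReal_rpow_of_nonneg (abs_nonneg _) (by norm_num),
      ← ENNReal.ofReal_mul (by positivity)]
    congr 1
    rw [Real.rpow_two, sq_abs]
  have hlB : ∫⁻ x, V x ^ (-(k * l / (l - 2))) ∂μ = ENNReal.ofReal B := by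
    rw [hB, ofReal_integral_eq_lintegral_ofReal hint₃
      (hVpos.mono fun x hx => Real.rpow_nonneg hx.le _)]
    apply lintegral_congr_ae
    filter_upwards [hVpos] with x hx
    rw [hV, ENNReal.ofReal_rpow_of_pos hx]
  have hlL : ∫⁻ x, ψ x ^ (l : ℝ) ∂μ = ENNReal.ofReal L := by
    rw [hL, ofReal_integral_eq_lintegral_ofReal hint₄
      (Filter.Eventually.of_forall fun x => Real.rpow_nonneg (abs_nonneg _) _)]
    apply lintegral_congr_ae
    filter_upwards with x
    rw [hψ, ENNReal.ofReal_rpow_of_nonneg (abs_nonneg _) hl0.le]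
  -- Step 1 : D ≤ ∫ |w-w̄||Δw| = (∫⁻ ψ φ).toReal ; in ofReal form
  have habs : IntegrableOn (fun x => |w x - wbar| * |laplacian w x|) Ω := by
    have := hint₅.abs
    simpa [abs_mul, IntegrableOn] using this
  have step1 : ENNReal.ofReal D ≤ ∫⁻ x, ψ x * φ x ∂μ := by
    have h1 : D ≤ ∫ x in Ω, |w x - wbar| * |laplacian w x| := by
      rw [hIBP]
      calc -∫ x in Ω, (w x - wbar) * laplacian w x
          ≤ |∫ x in Ω, (w x - wbar) * laplacian w x| := neg_le_abs _
        _ ≤ ∫ x in Ω, |w x - wbar| * |laplacian w x| := by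
            simpa [Real.norm_eq_abs, abs_mul] using
              norm_integral_le_integral_norm (μ := volume.restrict Ω)
                (fun x => (w x - wbar) * laplacian w x)
    calc ENNReal.ofReal D ≤ ENNReal.ofReal (∫ x in Ω, |w x - wbar| * |laplacian w x|) :=
          ENNReal.ofReal_le_ofReal h1
      _ = ∫⁻ x, ψ x * φ x ∂μ := by
          rw [ofReal_integral_eq_lintegral_ofReal habs
            (Filter.Eventually.of_forall fun x => by positivity)]
          apply lintegral_congr_ae
          filter_upwards with x
          rw [hψ, hφ, ENNReal.ofReal_mul (abs_nonneg _)]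
  -- Step 2 : Hölder with exponents 2,2
  have hconj22 : Real.HolderConjugate 2 2 := Real.holderConjugate_iff.mpr ⟨one_lt_two, by norm_num⟩
  have step2 : ∫⁻ x, ψ x * φ x ∂μ ≤
      (∫⁻ x, V x ^ (k:ℝ) * φ x ^ (2:ℝ) ∂μ) ^ ((1:ℝ)/2) *
      (∫⁻ x, ψ x ^ (2:ℝ) * V x ^ (-k) ∂μ) ^ ((1:ℝ)/2) := by
    have heq : ∫⁻ x, ψ x * φ x ∂μ =
        ∫⁻ x, ((fun x => V x ^ (k/2) * φ x) * (fun x => ψ x * V x ^ (-(k/2)))) x ∂μ := by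
      apply lintegral_congr_ae
      filter_upwards [hVpos] with x hx
      have hV0 : V x ≠ 0 := by
        simp only [hV, ne_eq, ENNReal.ofReal_eq_zero, not_le]; exact hx
      have hVtop : V x ≠ ⊤ := ENNReal.ofReal_ne_top
      have : V x ^ (k/2) * V x ^ (-(k/2)) = 1 := by
        rw [← ENNReal.rpow_add _ _ hV0 hVtop]
        simp
      simp only [Pi.mul_apply]
      calc ψ x * φ x = ψ x * φ x * (V x ^ (k/2) * V x ^ (-(k/2))) := by rw [this, mul_one]
        _ = V x ^ (k/2) * φ x * (ψ x * V x ^ (-(k/2))) := by ring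
    rw [heq]
    have := ENNReal.lintegral_mul_le_Lp_mul_Lq μ hconj22
      (f := fun x => V x ^ (k/2) * φ x) (g := fun x => ψ x * V x ^ (-(k/2)))
      ((hVm.pow_const _).aemeasurable.mul hφm.aemeasurable)
      (hψm.mul (hVm.pow_const _).aemeasurable)
    refine this.trans_eq ?_
    congr 1
    · congr 1
      apply lintegral_congr
      intro x
      rw [ENNReal.mul_rpow_of_nonneg _ _ (by norm_num : (0:ℝ) ≤ 2),
        ← ENNReal.rpow_mul]
      norm_num
    · congr 1
      apply lintegral_congr
      intro x
      rw [ENNReal.mul_rpow_of_nonneg _ _ (by norm_num : (0:ℝ) ≤ 2),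
        ← ENNReal.rpow_mul]
      norm_num
  -- Step 3 : Hölder with exponents l/2, l/(l-2)
  have hconj : Real.HolderConjugate (l/2) (l/(l-2)) := by
    rw [Real.holderConjugate_iff]
    constructor
    · linarith [(by linarith : (2:ℝ) < l)]
    · field_simp
      ring
  have step3 : ∫⁻ x, ψ x ^ (2:ℝ) * V x ^ (-k) ∂μ ≤
      (ENNReal.ofReal L) ^ ((2:ℝ)/l) * (ENNReal.ofReal B) ^ ((l-2)/l) := by
    have := ENNReal.lintegral_mul_le_Lp_mul_Lq μ hconj
      (f := fun x => ψ x ^ (2:ℝ)) (g := fun x => V x ^ (-k))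
      (hψm.pow_const _) (hVm.pow_const _).aemeasurable
    refine le_trans (le_of_eq ?_) (this.trans_eq ?_)
    · rfl
    congr 1
    · rw [← hlL]
      congr 1
      · apply lintegral_congr
        intro x
        rw [← ENNReal.rpow_mul]
        congr 1
        field_simp
      · field_simp
    · rw [← hlB]
      congr 1
      · apply lintegral_congr
        intro x
        rw [← ENNReal.rpow_mul]
        congr 1
        field_simp
      · field_simp
  -- Step 4 : Poincaré–Sobolev in ENNReal form
  have hPSe : (ENNReal.ofReal L) ^ ((1:ℝ)/l) ≤
      ENNReal.ofReal C_S * (ENNReal.ofReal D) ^ ((1:ℝ)/2) := by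
    rw [ENNReal.ofReal_rpow_of_nonneg hL0 (by positivity),
      ENNReal.ofReal_rpow_of_nonneg hD0 (by norm_num),
      ← ENNReal.ofReal_mul hCS.le]
    exact ENNReal.ofReal_le_ofReal hPS
  -- Combine
  set d : ENNReal := ENNReal.ofReal D with hd
  set a : ENNReal := ENNReal.ofReal A with ha
  set b : ENNReal := ENNReal.ofReal B with hb
  set c : ENNReal := ENNReal.ofReal C_S with hc
  have hkey : d ≤ a ^ ((1:ℝ)/2) * (c * d ^ ((1:ℝ)/2) * b ^ ((l-2)/(2*l))) := by
    calc d ≤ ∫⁻ x, ψ x * φ x ∂μ := step1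
      _ ≤ (∫⁻ x, V x ^ (k:ℝ) * φ x ^ (2:ℝ) ∂μ) ^ ((1:ℝ)/2) *
          (∫⁻ x, ψ x ^ (2:ℝ) * V x ^ (-k) ∂μ) ^ ((1:ℝ)/2) := step2
      _ ≤ a ^ ((1:ℝ)/2) * ((ENNReal.ofReal L) ^ ((2:ℝ)/l) * b ^ ((l-2)/l)) ^ ((1:ℝ)/2) := by
          rw [hlA]
          exact mul_le_mul_right (ENNReal.rpow_le_rpow step3 (by norm_num)) _
      _ = a ^ ((1:ℝ)/2) * ((ENNReal.ofReal L) ^ ((1:ℝ)/l) * b ^ ((l-2)/(2*l))) := by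
          congr 1
          rw [ENNReal.mul_rpow_of_nonneg _ _ (by norm_num : (0:ℝ) ≤ 1/2),
            ← ENNReal.rpow_mul, ← ENNReal.rpow_mul]
          congr 2
          · field_simp
          · field_simp
            try ring
            try simp
      _ ≤ a ^ ((1:ℝ)/2) * ((c * d ^ ((1:ℝ)/2)) * b ^ ((l-2)/(2*l))) := by
          gcongr <;> exact hPSe
      _ = a ^ ((1:ℝ)/2) * (c * d ^ ((1:ℝ)/2) * b ^ ((l-2)/(2*l))) := rfl
  -- divide by d^{1/2}
  have hd0 : d ≠ 0 := by
    simp only [hd, ne_eq, ENNReal.ofReal_eq_zero, not_le]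
    exact hDpos
  have hdtop : d ≠ ⊤ := ENNReal.ofReal_ne_top
  have hd12 : d ^ ((1:ℝ)/2) ≠ 0 := by
    simp [ENNReal.rpow_eq_zero_iff, hd0, hdtop]
  have hd12top : d ^ ((1:ℝ)/2) ≠ ⊤ := by
    exact (ENNReal.rpow_lt_top_of_nonneg (by norm_num) hdtop).ne
  have hsplit : d = d ^ ((1:ℝ)/2) * d ^ ((1:ℝ)/2) := by
    rw [← ENNReal.rpow_add _ _ hd0 hdtop]
    norm_num
  have hdiv : d ^ ((1:ℝ)/2) ≤ c * a ^ ((1:ℝ)/2) * b ^ ((l-2)/(2*l)) := by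
    have h' : d ^ ((1:ℝ)/2) * d ^ ((1:ℝ)/2) ≤
        (c * a ^ ((1:ℝ)/2) * b ^ ((l-2)/(2*l))) * d ^ ((1:ℝ)/2) := by
      rw [← hsplit]
      refine hkey.trans (le_of_eq ?_)
      ring
    exact (ENNReal.mul_le_mul_iff_left hd12 hd12top).mp h'
  have hfinal : d ≤ c ^ (2:ℝ) * a * b ^ ((l-2)/l) := by
    calc d = (d ^ ((1:ℝ)/2)) ^ (2:ℝ) := by
          rw [← ENNReal.rpow_mul]; norm_num
      _ ≤ (c * a ^ ((1:ℝ)/2) * b ^ ((l-2)/(2*l))) ^ (2:ℝ) :=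
          ENNReal.rpow_le_rpow hdiv (by norm_num)
      _ = c ^ (2:ℝ) * a * b ^ ((l-2)/l) := by
          rw [ENNReal.mul_rpow_of_nonneg _ _ (by norm_num : (0:ℝ) ≤ 2),
            ENNReal.mul_rpow_of_nonneg _ _ (by norm_num : (0:ℝ) ≤ 2),
            ← ENNReal.rpow_mul a, ← ENNReal.rpow_mul b]
          congr 2
          · norm_num
          · field_simp
  -- convert back to ℝ
  have hrhs : c ^ (2:ℝ) * a * b ^ ((l-2)/l) =
      ENNReal.ofReal (C_S ^ 2 * A * B ^ ((l-2)/l)) := by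
    rw [hc, ha, hb, ENNReal.ofReal_rpow_of_pos hCS,
      ENNReal.ofReal_rpow_of_nonneg hB0 (by positivity),
      ← ENNReal.ofReal_mul (by positivity), ← ENNReal.ofReal_mul (by positivity)]
    norm_num [Real.rpow_natCast]
  rw [hrhs] at hfinal
  have := (ENNReal.ofReal_le_ofReal_iff (by positivity)).mp hfinal
  simpa using this
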